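/- Let K be a complex matrix, R a positive semidefinite Hermitian matrix, and r a row vector expressible as a linear combination of the rows of R. Then the linear system (K R K^H)ᵀ x = (r K^H)ᵀ is consistent. -/

import Mathlib

open Matrix
open scoped ComplexOrder
open scoped MatrixOrder

lemma range_self_mul_conjTranspose {m n : ℕ} (A : Matrix (Fin m) (Fin n) ℂ) :
    LinearMap.range (A * Aᴴ).mulVecLin = LinearMap.range A.mulVecLin := by
  apply Submodule.eq_of_le_of_finrank_le
  · rintro x ⟨y, rfl⟩
    exact ⟨Aᴴ *ᵥ y, by simp [mulVecLin_apply, mulVec_mulVec]⟩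
  · have h1 : (A * Aᴴ).rank = A.rank := rank_self_mul_conjTranspose A
    simpa [Matrix.rank] using h1.ge

/-- If `R` is positive semidefinite Hermitian and the row vector `r` is a
linear combination of the rows of `R`, then the system
`(K R Kᴴ)ᵀ x = (r Kᴴ)ᵀ` is consistent. -/
theorem system_consistent_of_rowspace
    {m n : ℕ} (K : Matrix (Fin m) (Fin n) ℂ)
    (R : Matrix (Fin n) (Fin n) ℂ) (hR : R.PosSemidef)
    (r : Fin n → ℂ) (hr : ∃ c : Fin n → ℂ, c ᵥ* R = r) :
    ∃ x : Fin m → ℂ, (K * R * Kᴴ)ᵀ *ᵥ x = r ᵥ* Kᴴ := by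
  obtain ⟨c, rfl⟩ := hr
  set S := CFC.sqrt R with hSdef
  have hSherm : S.IsHermitian := (CFC.sqrt_nonneg R).posSemidef.isHermitian
  have hSS : S * S = R := CFC.sqrt_mul_sqrt_self R hR.nonneg
  have hM : K * R * Kᴴ = (K * S) * (K * S)ᴴ := by
    rw [conjTranspose_mul, hSherm.eq, ← hSS]; simp only [Matrix.mul_assoc]
  -- the conjugate of the RHS is in the range of K*R*Kᴴ
  have hmem : (K * S) *ᵥ (S *ᵥ star c) ∈
      LinearMap.range ((K * S) * (K * S)ᴴ).mulVecLin := by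
    rw [range_self_mul_conjTranspose]
    exact ⟨S *ᵥ star c, rfl⟩
  obtain ⟨y, hy⟩ := hmem
  refine ⟨star y, ?_⟩
  have hMherm : (K * R * Kᴴ).IsHermitian :=
    (hR.mul_mul_conjTranspose_same K).isHermitian
  have hy' : (K * R * Kᴴ) *ᵥ y = star ((c ᵥ* R) ᵥ* Kᴴ) := by
    rw [hM]
    rw [mulVecLin_apply] at hy
    rw [hy]
    rw [star_vecMul, star_vecMul, conjTranspose_conjTranspose, hR.isHermitian.eq,
      ← hSS]
    simp [mulVec_mulVec, Matrix.mul_assoc]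
  rw [mulVec_transpose, ← hMherm.eq, ← star_mulVec, hy', star_star]
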